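/- Let a > 0 and γ > 0, and let x be real. Define the associated Charlier polynomials 𝓒_n(x; a, γ) by the recurrence a·𝓒_{n+1} = (n+γ+a−x)·𝓒_n − (n+γ)·𝓒_{n−1}, 𝓒_{−1} = 0, 𝓒_0 = 1. Then the explicit formula 𝓒_n(x; a, γ) = [(γ+1)_n / n!] · Σ_{k=0}^n (−a)^{−k} [(−n)_k (γ−x)_k / (γ+1)_k] · Σ_{j=0}^{n−k} [(k−n)_j (γ−x+k)_j (γ)_j] / [(γ−x)_j (γ+k+1)_j j!] holds for all n ≥ 0, provided γ − x is not a nonpositive integer ≥ −(n−1) (so denominators are nonzero). -/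

import Mathlib

/-- Pochhammer symbol (rising factorial) of a real number. -/
noncomputable def poch (a : ℝ) (k : ℕ) : ℝ := ∏ i ∈ Finset.range k, (a + i)

open Finset

lemma poch_zero (a : ℝ) : poch a 0 = 1 := by simp [poch]

lemma poch_one (a : ℝ) : poch a 1 = a := by simp [poch]

lemma poch_succ (a : ℝ) (k : ℕ) : poch a (k+1) = poch a k * (a + k) := by
  simp [poch, Finset.prod_range_succ]

lemma poch_add (a : ℝ) (k j : ℕ) : poch a (k+j) = poch a k * poch (a+k) j := by
  rw [poch, poch, poch, Finset.prod_range_add]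
  congr 1
  exact Finset.prod_congr rfl fun i _ => by push_cast; ring

lemma poch_pos {a : ℝ} (h : 0 < a) (k : ℕ) : 0 < poch a k := by
  apply Finset.prod_pos; intro i _; positivity

lemma poch_ne_zero {a : ℝ} {k : ℕ} (h : ∀ i : ℕ, i < k → a + i ≠ 0) : poch a k ≠ 0 :=
  Finset.prod_ne_zero_iff.mpr fun i hi => h i (Finset.mem_range.mp hi)

lemma poch_neg_nat {n m : ℕ} (h : m ≤ n) :
    poch (-(n:ℝ)) m * ((n-m).factorial : ℝ) = (-1)^m * (n.factorial : ℝ) := by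
  induction m with
  | zero => simp [poch_zero]
  | succ m ih =>
      have hm : m ≤ n := Nat.le_of_succ_le h
      have h1 : n - m = (n - (m+1)) + 1 := by omega
      have ih' := ih hm
      rw [h1, Nat.factorial_succ] at ih'
      have h2 : (-(n:ℝ) + m) = -(((n - (m+1) : ℕ)):ℝ) - 1 := by
        have : (((n-(m+1):ℕ)):ℝ) = (n:ℝ) - m - 1 := by
          push_cast [Nat.cast_sub h]; ring
        rw [this]; ring
      rw [poch_succ, h2]
      push_cast at ih' ⊢
      calc poch (-(n:ℝ)) m * (-(((n - (m+1) : ℕ)):ℝ) - 1) * ((n-(m+1)).factorial : ℝ)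
          = -(poch (-(n:ℝ)) m * (((((n - (m+1) : ℕ)):ℝ) + 1) * ((n-(m+1)).factorial : ℝ))) := by ring
        _ = -((-1)^m * (n.factorial : ℝ)) := by rw [ih']
        _ = (-1)^(m+1) * (n.factorial : ℝ) := by ring

lemma poch_succ' (a : ℝ) (k : ℕ) : poch a (k+1) = a * poch (a+1) k := by
  have h := poch_add a 1 k
  rw [poch_one] at h
  rw [show k+1 = 1+k by ring, h]; norm_num

namespace AssocCharlierAux

/-- The auxiliary sequence B. -/
noncomputable def B (a γ c : ℝ) : ℕ → ℝ
  | 0 => 1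
  | (m+1) => poch γ (m+1) / (Nat.factorial (m+1)) - ((c + m)/a) * B a γ c m

noncomputable def E (γ : ℝ) (n m : ℕ) : ℝ :=
  if m ≤ n then poch (γ + m + 1) (n - m) / ((n-m).factorial : ℝ) else 0

noncomputable def D (a γ c : ℝ) (n : ℕ) : ℝ :=
  ∑ m ∈ Finset.range (n+1), (-1)^m * E γ n m * B a γ c m

/-- explicit formula for B -/
lemma B_explicit (a γ c : ℝ) (m : ℕ) :
    B a γ c m = ∑ k ∈ Finset.range (m+1),
      (-1/a)^k * poch (c + ((m - k : ℕ) : ℝ)) k * poch γ (m-k) / ((m-k).factorial : ℝ) := by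
  induction m with
  | zero => simp [B, poch_zero]
  | succ m ih =>
      rw [Finset.sum_range_succ' _ (m+1)]
      simp only [Nat.succ_sub_succ, Nat.sub_zero, pow_zero, one_mul, poch_zero]
      have hterm : ∀ k ∈ Finset.range (m+1),
          (-1/a)^(k+1) * poch (c + ((m - k : ℕ) : ℝ)) (k+1) * poch γ (m-k) / ((m-k).factorial : ℝ)
          = -((c+m)/a) * ((-1/a)^k * poch (c + ((m - k : ℕ) : ℝ)) k * poch γ (m-k) / ((m-k).factorial : ℝ)) := by
        intro k hk
        have hk' : k ≤ m := Nat.lt_succ_iff.mp (Finset.mem_range.mp hk)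
        have hcast : ((m - k : ℕ) : ℝ) + k = m := by
          push_cast [Nat.cast_sub hk']; ring
        rw [poch_succ, pow_succ]
        have : c + ((m - k : ℕ) : ℝ) + k = c + m := by rw [add_assoc, hcast]
        rw [this]; ring
      rw [Finset.sum_congr rfl hterm]
      have hB : B a γ c (m+1) = poch γ (m+1) / (((m+1).factorial : ℕ) : ℝ) - ((c+m)/a) * B a γ c m := rfl
      rw [hB, ih, Finset.mul_sum]
      have : ∀ k ∈ Finset.range (m+1),
          -((c+(m:ℝ))/a) * ((-1/a)^k * poch (c + ((m - k : ℕ) : ℝ)) k * poch γ (m-k) / ((m-k).factorial : ℝ))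
          = -((c+(m:ℝ))/a * ((-1/a)^k * poch (c + ((m - k : ℕ) : ℝ)) k * poch γ (m-k) / ((m-k).factorial : ℝ))) := by
        intro k _; ring
      rw [Finset.sum_congr rfl this, Finset.sum_neg_distrib]
      ring

lemma pf (n : ℕ) : ∀ γ : ℝ, 0 < γ →
    ∑ m ∈ Finset.range (n+1), (-1)^m * (n.choose m : ℝ) / (γ + m) = (n.factorial : ℝ) / poch γ (n+1) := by
  induction n with
  | zero => intro γ hγ; simp [poch_one]
  | succ n ih =>
      intro γ hγ
      rw [Finset.sum_range_succ' _ (n+1)]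
      simp only [Nat.choose_zero_right, pow_zero, Nat.cast_zero, Nat.cast_one, one_mul, add_zero]
      have hsplit : ∀ k ∈ Finset.range (n+1),
          (-1)^(k+1) * ((n+1).choose (k+1) : ℝ) / (γ + (k+1 : ℕ))
          = (-1)^(k+1) * (n.choose (k+1) : ℝ) / (γ + (k+1 : ℕ))
            + (-((-1)^k * (n.choose k : ℝ) / ((γ+1) + k))) := by
        intro k _
        rw [Nat.choose_succ_succ]
        push_cast
        have hne : γ + ((k:ℝ)+1) ≠ 0 := by positivity
        field_simp
        ring
      rw [Finset.sum_congr rfl hsplit, Finset.sum_add_distrib, Finset.sum_neg_distrib]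
      have e1 : (∑ k ∈ Finset.range (n+1), (-1)^(k+1) * (n.choose (k+1) : ℝ) / (γ + (k+1 : ℕ)))
          + 1 / γ = (n.factorial : ℝ) / poch γ (n+1) := by
        have h := Finset.sum_range_succ' (fun m => (-1)^m * (n.choose m : ℝ) / (γ + m)) (n+1)
        rw [Finset.sum_range_succ] at h
        have hz : (-1:ℝ)^(n+1) * (n.choose (n+1) : ℝ) / (γ + ((n+1:ℕ):ℝ)) = 0 := by
          simp [Nat.choose_eq_zero_of_lt (Nat.lt_succ_self n)]
        rw [ih γ hγ] at h
        simp only [Nat.choose_zero_right, pow_zero, Nat.cast_zero, Nat.cast_one, one_mul,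
          add_zero] at h hz
        rw [hz] at h
        linarith [h]
      have e2 : ∑ k ∈ Finset.range (n+1), (-1)^k * (n.choose k : ℝ) / ((γ+1) + k)
          = (n.factorial : ℝ) / poch (γ+1) (n+1) := ih (γ+1) (by positivity)
      have hP : 0 < poch (γ+1) n := poch_pos (by positivity) n
      have key : (n.factorial : ℝ) / poch γ (n+1) - (n.factorial : ℝ) / poch (γ+1) (n+1)
          = ((n+1).factorial : ℝ) / poch γ (n+2) := by
        rw [show poch γ (n+2) = γ * poch (γ+1) (n+1) from poch_succ' γ (n+1),
            show poch γ (n+1) = γ * poch (γ+1) n from poch_succ' γ n,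
            show poch (γ+1) (n+1) = poch (γ+1) n * ((γ+1) + n) from poch_succ (γ+1) n]
        rw [Nat.factorial_succ]
        have h1 : γ ≠ 0 := ne_of_gt hγ
        have h2 : poch (γ+1) n ≠ 0 := ne_of_gt hP
        have h3 : (γ+1) + (n:ℝ) ≠ 0 := by positivity
        field_simp
        push_cast
        ring
      push_cast at e1 e2 key ⊢
      linarith [e1, e2, key]

lemma S_eq_one {γ : ℝ} (hγ : 0 < γ) (n : ℕ) :
    ∑ m ∈ Finset.range (n+1), (-1)^m * E γ n m * (poch γ m / (m.factorial : ℝ)) = 1 := by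
  have key : ∀ m ∈ Finset.range (n+1),
      (-1)^m * E γ n m * (poch γ m / (m.factorial : ℝ))
      = (poch γ (n+1) / (n.factorial : ℝ)) * ((-1)^m * (n.choose m : ℝ) / (γ + m)) := by
    intro m hm
    have hmn : m ≤ n := Nat.lt_succ_iff.mp (Finset.mem_range.mp hm)
    rw [E, if_pos hmn]
    have h1 : poch γ m * (γ + m) * poch (γ + m + 1) (n - m) = poch γ (n+1) := by
      have h := poch_add γ (m+1) (n-m)
      rw [show (m+1) + (n-m) = n+1 by omega] at h
      rw [poch_succ γ m] at h
      rw [show (γ + ((m+1:ℕ):ℝ)) = γ + m + 1 by push_cast; ring] at h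
      linarith [h]
    have h2 : ((n.choose m : ℕ) : ℝ) * (m.factorial : ℝ) * ((n-m).factorial : ℝ) = (n.factorial : ℝ) := by
      exact_mod_cast congrArg (Nat.cast : ℕ → ℝ) (Nat.choose_mul_factorial_mul_factorial hmn)
    have hm0 : (m.factorial : ℝ) ≠ 0 := Nat.cast_ne_zero.mpr (Nat.factorial_ne_zero m)
    have hnm0 : ((n-m).factorial : ℝ) ≠ 0 := Nat.cast_ne_zero.mpr (Nat.factorial_ne_zero _)
    have hn0 : (n.factorial : ℝ) ≠ 0 := Nat.cast_ne_zero.mpr (Nat.factorial_ne_zero n)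
    have hγm : γ + (m:ℝ) ≠ 0 := by positivity
    field_simp
    linear_combination (n.factorial : ℝ) * h1 - poch γ (n+1) * h2
  rw [Finset.sum_congr rfl key, ← Finset.mul_sum, pf n γ hγ]
  have hpoch : poch γ (n+1) ≠ 0 := ne_of_gt (poch_pos hγ (n+1))
  have hn0 : (n.factorial : ℝ) ≠ 0 := Nat.cast_ne_zero.mpr (Nat.factorial_ne_zero n)
  field_simp

lemma E_coef {γ : ℝ} (c : ℝ) (hγ : 0 < γ) (n m : ℕ) (hm : m ≤ n+1) :
    (c + m) * (E γ (n+2) (m+1) - E γ (n+1) (m+1))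
    = ((n:ℝ)+1+c) * E γ (n+1) m - ((n:ℝ)+1+γ) * E γ n m := by
  rcases Nat.lt_or_ge m (n+1) with hlt | hge
  · -- m ≤ n
    have hmn : m ≤ n := by omega
    obtain ⟨t, rfl⟩ := Nat.exists_eq_add_of_le hmn
    have e1 : E γ (m+t+2) (m+1) = poch (γ+m+2) (t+1) / (((t+1).factorial : ℕ) : ℝ) := by
      rw [E, if_pos (by omega), show (m+t+2)-(m+1) = t+1 by omega]
      congr 2
      push_cast; ring
    have e2 : E γ (m+t+1) (m+1) = poch (γ+m+2) t / ((t.factorial : ℕ) : ℝ) := by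
      rw [E, if_pos (by omega), show (m+t+1)-(m+1) = t by omega]
      congr 2
      push_cast; ring
    have e3 : E γ (m+t+1) m = poch (γ+m+1) (t+1) / (((t+1).factorial : ℕ) : ℝ) := by
      rw [E, if_pos (by omega), show (m+t+1)-m = t+1 by omega]
    have e4 : E γ (m+t) m = poch (γ+m+1) t / ((t.factorial : ℕ) : ℝ) := by
      rw [E, if_pos (by omega), show (m+t)-m = t by omega]
    rw [e1, e2, e3, e4]
    have p1 : poch (γ+m+2) (t+1) = poch (γ+m+2) t * (γ+m+2+t) := poch_succ _ t
    have p2 : poch (γ+m+1) (t+1) = poch (γ+m+1) t * (γ+m+1+t) := poch_succ _ t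
    have p3 : poch (γ+m+1) (t+1) = (γ+m+1) * poch (γ+m+2) t := by
      have := poch_succ' (γ+m+1) t
      rw [this]; congr 1; ring
    have q : (γ+(m:ℝ)+1) * poch (γ+m+2) t = poch (γ+m+1) t * (γ+m+1+t) := by
      rw [← p3, p2]
    have ft : (((t+1).factorial : ℕ) : ℝ) = ((t:ℝ)+1) * ((t.factorial : ℕ) : ℝ) := by
      rw [Nat.factorial_succ]; push_cast; ring
    have ht0 : ((t.factorial : ℕ) : ℝ) ≠ 0 := Nat.cast_ne_zero.mpr (Nat.factorial_ne_zero t)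
    have ht1 : ((t:ℝ)+1) ≠ 0 := by positivity
    rw [p1, p2, ft]
    push_cast
    field_simp
    linear_combination (c + (m:ℝ)) * q
  · -- m = n+1
    have hm1 : m = n+1 := by omega
    subst hm1
    have e1 : E γ (n+2) (n+2) = 1 := by
      rw [E, if_pos le_rfl]; simp [poch_zero]
    have e2 : E γ (n+1) (n+2) = 0 := by
      rw [E, if_neg (by omega)]
    have e3 : E γ (n+1) (n+1) = 1 := by
      rw [E, if_pos le_rfl]; simp [poch_zero]
    have e4 : E γ n (n+1) = 0 := by
      rw [E, if_neg (by omega)]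
    rw [e1, e2, e3, e4]
    push_cast
    ring

lemma expand (a γ c : ℝ) (ha : a ≠ 0) (N : ℕ) :
    a * D a γ c (N+1)
    = a * (∑ m ∈ Finset.range (N+2), (-1)^m * E γ (N+1) m * (poch γ m / ((m.factorial : ℕ) : ℝ)))
      + ∑ m ∈ Finset.range (N+1), (-1)^m * (c+m) * E γ (N+1) (m+1) * B a γ c m := by
  rw [D, Finset.sum_range_succ' _ (N+1),
      Finset.sum_range_succ' (fun m => (-1:ℝ)^m * E γ (N+1) m * (poch γ m / ((m.factorial : ℕ) : ℝ))) (N+1)]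
  rw [mul_add, mul_add, Finset.mul_sum, Finset.mul_sum]
  have hterm : ∀ m ∈ Finset.range (N+1),
      a * ((-1)^(m+1) * E γ (N+1) (m+1) * B a γ c (m+1))
      = a * ((-1)^(m+1) * E γ (N+1) (m+1) * (poch γ (m+1) / (((m+1).factorial : ℕ) : ℝ)))
        + (-1)^m * (c+m) * E γ (N+1) (m+1) * B a γ c m := by
    intro m _
    have hB : B a γ c (m+1) = poch γ (m+1) / (((m+1).factorial : ℕ) : ℝ) - ((c + m)/a) * B a γ c m := rfl
    rw [hB]
    field_simp
    ring
  rw [Finset.sum_congr rfl hterm, Finset.sum_add_distrib]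
  have hB0 : B a γ c 0 = poch γ 0 / ((Nat.factorial 0 : ℕ) : ℝ) := by simp [B, poch_zero]
  rw [hB0]
  ring

lemma D_zero (a γ c : ℝ) : D a γ c 0 = 1 := by
  simp [D, E, B, poch_zero]

lemma D_one (a γ c : ℝ) (ha : a ≠ 0) : a * D a γ c 1 = a + c := by
  have h0 : E γ 1 0 = γ + 1 := by
    rw [E, if_pos (by omega)]
    simp [poch_one]
  have h1 : E γ 1 1 = 1 := by
    rw [E, if_pos le_rfl]; simp [poch_zero]
  have hB1 : B a γ c (0+1) = poch γ (0+1) / (((0+1).factorial : ℕ) : ℝ) - ((c + ((0:ℕ):ℝ))/a) * B a γ c 0 := rfl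
  norm_num at hB1
  have hB0 : B a γ c 0 = 1 := rfl
  rw [D]
  rw [Finset.sum_range_succ, Finset.sum_range_one, h0, h1, hB1, hB0, poch_one]
  field_simp
  ring

lemma D_rec (a γ c : ℝ) (ha : a ≠ 0) (hγ : 0 < γ) (n : ℕ) :
    a * D a γ c (n+2) = ((n:ℝ)+1+c+a) * D a γ c (n+1) - ((n:ℝ)+1+γ) * D a γ c n := by
  have hS2 := S_eq_one hγ (n+2)
  have hS1 := S_eq_one hγ (n+1)
  have hE2 := expand a γ c ha (n+1)
  have hE1 := expand a γ c ha n
  rw [show n+1+2 = n+3 from rfl] at hS2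
  rw [show n+1+1+1 = n+3 from rfl] at hE2
  rw [show n+1+1 = n+2 from rfl] at hS1 hE1
  rw [hS2, mul_one] at hE2
  rw [hS1, mul_one] at hE1
  -- extend second sum to range (n+2)
  rw [show n+1+1 = n+2 from rfl] at hE2
  have hext : ∑ m ∈ Finset.range (n+2), (-1:ℝ)^m * (c+m) * E γ (n+1) (m+1) * B a γ c m
      = ∑ m ∈ Finset.range (n+1), (-1:ℝ)^m * (c+m) * E γ (n+1) (m+1) * B a γ c m := by
    rw [Finset.sum_range_succ]
    have : E γ (n+1) (n+1+1) = 0 := by rw [E, if_neg (by omega)]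
    rw [this]
    ring
  rw [← hext] at hE1
  have key : ∑ m ∈ Finset.range (n+2), (-1:ℝ)^m * (c+m) * E γ (n+2) (m+1) * B a γ c m
      - ∑ m ∈ Finset.range (n+2), (-1:ℝ)^m * (c+m) * E γ (n+1) (m+1) * B a γ c m
      = ((n:ℝ)+1+c) * D a γ c (n+1) - ((n:ℝ)+1+γ) * D a γ c n := by
    rw [← Finset.sum_sub_distrib]
    have hterm : ∀ m ∈ Finset.range (n+2),
        (-1:ℝ)^m * (c+m) * E γ (n+2) (m+1) * B a γ c m
          - (-1:ℝ)^m * (c+m) * E γ (n+1) (m+1) * B a γ c m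
        = ((n:ℝ)+1+c) * ((-1)^m * E γ (n+1) m * B a γ c m)
          - ((n:ℝ)+1+γ) * ((-1)^m * E γ n m * B a γ c m) := by
      intro m hm
      have hm' : m ≤ n+1 := Nat.lt_succ_iff.mp (Finset.mem_range.mp hm)
      have hcoef := E_coef c hγ n m hm'
      calc (-1:ℝ)^m * (c+m) * E γ (n+2) (m+1) * B a γ c m
            - (-1:ℝ)^m * (c+m) * E γ (n+1) (m+1) * B a γ c m
          = (-1:ℝ)^m * B a γ c m * ((c+m) * (E γ (n+2) (m+1) - E γ (n+1) (m+1))) := by ring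
        _ = (-1:ℝ)^m * B a γ c m * (((n:ℝ)+1+c) * E γ (n+1) m - ((n:ℝ)+1+γ) * E γ n m) := by rw [hcoef]
        _ = _ := by ring
    rw [Finset.sum_congr rfl hterm, Finset.sum_sub_distrib]
    have hD1 : ∑ m ∈ Finset.range (n+2), ((n:ℝ)+1+c) * ((-1)^m * E γ (n+1) m * B a γ c m)
        = ((n:ℝ)+1+c) * D a γ c (n+1) := by
      rw [D, ← Finset.mul_sum]
    have hD0 : ∑ m ∈ Finset.range (n+2), ((n:ℝ)+1+γ) * ((-1)^m * E γ n m * B a γ c m)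
        = ((n:ℝ)+1+γ) * D a γ c n := by
      rw [Finset.sum_range_succ]
      have : E γ n (n+1) = 0 := by rw [E, if_neg (by omega)]
      rw [this, D, ← Finset.mul_sum]
      ring
    rw [hD1, hD0]
  linear_combination hE2 - hE1 + key

lemma term_eq (a γ c : ℝ) (ha : a ≠ 0) (hγ : 0 < γ) (n k j : ℕ) (hkj : k + j ≤ n)
    (hcj : poch c j ≠ 0) (hck : poch c k ≠ 0) :
    poch (γ + 1) n / (Nat.factorial n : ℝ) *
      ((-a) ^ (-(k : ℤ)) * (poch (-(n : ℝ)) k * poch c k / poch (γ + 1) k) *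
        (poch ((k : ℝ) - n) j * poch (c + k) j * poch γ j /
          (poch c j * poch (γ + k + 1) j * (Nat.factorial j : ℝ))))
    = (-1)^(k+j) * E γ n (k+j) *
        ((-1/a)^k * poch (c + ((j:ℕ) : ℝ)) k * poch γ j / ((Nat.factorial j : ℕ) : ℝ)) := by
  -- normalize zpow
  have hz : (-a) ^ (-(k : ℤ)) = (-1/a)^k := by
    rw [zpow_neg, zpow_natCast, ← inv_pow, inv_neg]
    congr 1
    field_simp
  rw [hz]
  -- E unfold
  rw [E, if_pos hkj]
  -- poch argument normalizations
  have harg1 : poch ((k : ℝ) - n) j = poch (-(n:ℝ) + k) j := by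
    congr 1; ring
  have harg2 : poch (γ + k + 1) j = poch ((γ+1) + k) j := by
    congr 1; ring
  rw [harg1, harg2]
  -- key product identities
  have hM : poch (-(n:ℝ)) (k+j) = poch (-(n:ℝ)) k * poch (-(n:ℝ) + k) j := poch_add _ k j
  have hC1 : poch c (k+j) = poch c k * poch (c + k) j := poch_add c k j
  have hC2 : poch c (k+j) = poch c j * poch (c + (j:ℝ)) k := by
    rw [Nat.add_comm]; exact poch_add c j k
  have hG : poch (γ+1) (k+j) = poch (γ+1) k * poch ((γ+1) + k) j := poch_add _ k j
  have hPn : poch (γ+1) n = poch (γ+1) (k+j) * poch (γ + (k+j : ℕ) + 1) (n - (k+j)) := by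
    have h := poch_add (γ+1) (k+j) (n - (k+j))
    rw [show (k+j) + (n - (k+j)) = n by omega] at h
    rw [h]
    congr 2
    push_cast; ring
  have hNeg : poch (-(n:ℝ)) (k+j) * (((n-(k+j)).factorial : ℕ) : ℝ) = (-1)^(k+j) * (n.factorial : ℝ) :=
    poch_neg_nat hkj
  -- nonzeros
  have hGk : poch (γ+1) k ≠ 0 := ne_of_gt (poch_pos (by positivity) k)
  have hGkj : poch ((γ+1) + k) j ≠ 0 := ne_of_gt (poch_pos (by positivity) j)
  have hf1 : (Nat.factorial n : ℝ) ≠ 0 := Nat.cast_ne_zero.mpr (Nat.factorial_ne_zero n)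
  have hf2 : (Nat.factorial j : ℝ) ≠ 0 := Nat.cast_ne_zero.mpr (Nat.factorial_ne_zero j)
  have hf3 : (((n-(k+j)).factorial : ℕ) : ℝ) ≠ 0 := Nat.cast_ne_zero.mpr (Nat.factorial_ne_zero _)
  rw [hPn, hG]
  have hsign : ((-1:ℝ))^(k+j)
      = poch (-(n:ℝ)) k * poch (-(n:ℝ) + k) j * (((n-(k+j)).factorial : ℕ) : ℝ) / (n.factorial : ℝ) := by
    rw [← hM]
    field_simp
    linarith [hNeg]
  rw [hsign]
  have hccc : poch c k * poch (c + (k:ℝ)) j = poch c j * poch (c + (j:ℝ)) k := by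
    rw [← hC1, hC2]
  have hCKj : poch (c + (k:ℝ)) j = poch c j * poch (c + (j:ℝ)) k / poch c k := by
    rw [eq_div_iff hck]
    linear_combination hccc
  rw [hCKj]
  push_cast
  field_simp

lemma triangle_swap (f : ℕ → ℕ → ℝ) (n : ℕ) :
    ∑ k ∈ Finset.range (n+1), ∑ j ∈ Finset.range (n-k+1), f k j
    = ∑ m ∈ Finset.range (n+1), ∑ k ∈ Finset.range (m+1), f k (m-k) := by
  rw [Finset.sum_sigma', Finset.sum_sigma']
  apply Finset.sum_bij (fun (p : Σ _ : ℕ, ℕ) (_ : p ∈ (Finset.range (n+1)).sigma fun k => Finset.range (n-k+1)) => (⟨p.1 + p.2, p.1⟩ : Σ _ : ℕ, ℕ))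
  · rintro ⟨k, j⟩ hp
    simp only [Finset.mem_sigma, Finset.mem_range] at hp ⊢
    omega
  · rintro ⟨k, j⟩ hp ⟨k', j'⟩ hq hpq
    have h1 : k + j = k' + j' := congrArg Sigma.fst hpq
    have h2 : k = k' := congrArg Sigma.snd hpq
    have h3 : j = j' := by omega
    subst h2; subst h3; rfl
  · rintro ⟨m, k⟩ hq
    simp only [Finset.mem_sigma, Finset.mem_range] at hq
    refine ⟨⟨k, m - k⟩, ?_, ?_⟩
    · simp only [Finset.mem_sigma, Finset.mem_range]
      omega
    · have hkm : k + (m - k) = m := by omega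
      rw [hkm]
  · rintro ⟨k, j⟩ hp
    simp only [Finset.mem_sigma, Finset.mem_range] at hp
    simp only []
    rw [show k + j - k = j by omega]

lemma rhs_eq (a γ x : ℝ) (ha : a ≠ 0) (hγ : 0 < γ) (n : ℕ)
    (hx : ∀ j : ℕ, j < n → γ - x + j ≠ 0) :
    poch (γ + 1) n / (Nat.factorial n) *
      ∑ k ∈ Finset.range (n + 1),
        (-a) ^ (-(k : ℤ)) * (poch (-(n : ℝ)) k * poch (γ - x) k / poch (γ + 1) k) *
          ∑ j ∈ Finset.range (n - k + 1),
            poch ((k : ℝ) - n) j * poch (γ - x + k) j * poch γ j /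
              (poch (γ - x) j * poch (γ + k + 1) j * (Nat.factorial j))
    = D a γ (γ - x) n := by
  set c := γ - x with hc
  have hpoch_ne : ∀ m : ℕ, m ≤ n → poch c m ≠ 0 := by
    intro m hm
    apply poch_ne_zero
    intro i hi
    exact hx i (by omega)
  -- rewrite as a double sum of single terms
  rw [Finset.mul_sum]
  have step1 : ∀ k ∈ Finset.range (n+1),
      poch (γ + 1) n / (Nat.factorial n) *
        ((-a) ^ (-(k : ℤ)) * (poch (-(n : ℝ)) k * poch c k / poch (γ + 1) k) *
          ∑ j ∈ Finset.range (n - k + 1),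
            poch ((k : ℝ) - n) j * poch (c + k) j * poch γ j /
              (poch c j * poch (γ + k + 1) j * (Nat.factorial j)))
      = ∑ j ∈ Finset.range (n - k + 1),
          (-1)^(k+j) * E γ n (k+j) *
            ((-1/a)^k * poch (c + ((j:ℕ) : ℝ)) k * poch γ j / ((Nat.factorial j : ℕ) : ℝ)) := by
    intro k hk
    have hkn : k ≤ n := Nat.lt_succ_iff.mp (Finset.mem_range.mp hk)
    rw [Finset.mul_sum, Finset.mul_sum]
    apply Finset.sum_congr rfl
    intro j hj
    have hjn : j ≤ n - k := Nat.lt_succ_iff.mp (Finset.mem_range.mp hj)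
    have hkj : k + j ≤ n := by omega
    exact term_eq a γ c ha hγ n k j hkj (hpoch_ne j (by omega)) (hpoch_ne k hkn)
  rw [Finset.sum_congr rfl step1]
  rw [triangle_swap (fun k j => (-1)^(k+j) * E γ n (k+j) *
      ((-1/a)^k * poch (c + ((j:ℕ) : ℝ)) k * poch γ j / ((Nat.factorial j : ℕ) : ℝ))) n]
  rw [D]
  apply Finset.sum_congr rfl
  intro m hm
  have hmn : m ≤ n := Nat.lt_succ_iff.mp (Finset.mem_range.mp hm)
  have inner : ∀ k ∈ Finset.range (m+1),
      (-1:ℝ)^(k+(m-k)) * E γ n (k+(m-k)) *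
        ((-1/a)^k * poch (c + (((m-k):ℕ) : ℝ)) k * poch γ (m-k) / ((Nat.factorial (m-k) : ℕ) : ℝ))
      = (-1)^m * E γ n m * ((-1/a)^k * poch (c + (((m-k):ℕ) : ℝ)) k * poch γ (m-k) / ((Nat.factorial (m-k) : ℕ) : ℝ)) := by
    intro k hk
    have hkm : k ≤ m := Nat.lt_succ_iff.mp (Finset.mem_range.mp hk)
    rw [show k + (m-k) = m by omega]
  rw [Finset.sum_congr rfl inner, ← Finset.mul_sum, B_explicit a γ c m]

end AssocCharlierAux


/-- Charlier polynomials \(C_n(x;a)\). -/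
noncomputable def charlier (a x : ℝ) (n : ℕ) : ℝ :=
  ∑ k ∈ Finset.range (n + 1),
    poch (-(n : ℝ)) k * poch (-x) k / (Nat.factorial k) * (-1 / a) ^ k

/-- The associated Charlier polynomials, defined by their three-term recurrence
(with association parameter γ and the convention 𝓒₋₁ = 0, 𝓒₀ = 1). -/
def IsAssocCharlier (a γ : ℝ) (C : ℕ → ℝ → ℝ) : Prop :=
  (∀ x, C 0 x = 1) ∧
  (∀ x, a * C 1 x = γ + a - x) ∧
  (∀ x, ∀ n : ℕ,
    a * C (n + 2) x =
      ((n : ℝ) + 1 + γ + a - x) * C (n + 1) x - ((n : ℝ) + 1 + γ) * C n x)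

theorem assoc_charlier_explicit (a γ x : ℝ) (ha : 0 < a) (hγ : 0 < γ)
    (C : ℕ → ℝ → ℝ) (hC : IsAssocCharlier a γ C) (n : ℕ)
    (hx : ∀ j : ℕ, j < n → γ - x + j ≠ 0) :
    C n x = poch (γ + 1) n / (Nat.factorial n) *
      ∑ k ∈ Finset.range (n + 1),
        (-a) ^ (-(k : ℤ)) * (poch (-(n : ℝ)) k * poch (γ - x) k / poch (γ + 1) k) *
          ∑ j ∈ Finset.range (n - k + 1),
            poch ((k : ℝ) - n) j * poch (γ - x + k) j * poch γ j /
              (poch (γ - x) j * poch (γ + k + 1) j * (Nat.factorial j)) := by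
  obtain ⟨h0, h1, hrec⟩ := hC
  have ha' : a ≠ 0 := ne_of_gt ha
  have hR := AssocCharlierAux.rhs_eq a γ x ha' hγ n hx
  rw [hR]
  have key : ∀ m : ℕ, C m x = AssocCharlierAux.D a γ (γ-x) m
      ∧ C (m+1) x = AssocCharlierAux.D a γ (γ-x) (m+1) := by
    intro m
    induction m with
    | zero =>
        refine ⟨by rw [h0 x, AssocCharlierAux.D_zero], ?_⟩
        have e1 := h1 x
        have e2 := AssocCharlierAux.D_one a γ (γ-x) ha'
        apply mul_left_cancel₀ ha'
        rw [e1, e2]; ring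
    | succ m ih =>
        refine ⟨ih.2, ?_⟩
        have e1 := hrec x m
        have e2 := AssocCharlierAux.D_rec a γ (γ-x) ha' hγ m
        apply mul_left_cancel₀ ha'
        rw [e1, e2, ih.1, ih.2]; ring
  exact (key n).1
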